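/- The Laplace transform of t ↦ t^{β-1} E_{α,β}^γ(t^α z) is s^{αγ-β} / (s^α - z)^γ, i.e., ∫_0^∞ e^{-st} t^{β-1} E_{α,β}^γ(t^α z) dt = s^{αγ-β} (s^α - z)^{-γ} for real s > 0 with s^α > |z|, where α > 0, β > 0 and z real. -/

import Mathlib

open scoped BigOperators
open Real MeasureTheory Set Filter Topology

/-- Pochhammer symbol `(γ)_k = γ(γ+1)⋯(γ+k-1)`. -/
noncomputable def poch (γ : ℝ) (k : ℕ) : ℝ := ∏ i ∈ Finset.range k, (γ + i)

/-- The real-argument Prabhakar function `E_{α,β}^γ(x)`. -/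
noncomputable def prabhakarR (α β γ : ℝ) (x : ℝ) : ℝ :=
  ∑' k : ℕ, poch γ k * x ^ k / (Nat.factorial k * Real.Gamma (α * k + β))


lemma poch_succ (c : ℝ) (k : ℕ) : poch c (k + 1) = poch c k * (c + k) :=
  Finset.prod_range_succ _ _

lemma poch_pos {c : ℝ} (hc : 0 < c) (k : ℕ) : 0 < poch c k :=
  Finset.prod_pos fun i _ => by positivity

lemma abs_poch_le (γ : ℝ) (k : ℕ) : |poch γ k| ≤ poch (|γ| + 1) k := by
  rw [poch, poch, Finset.abs_prod]
  refine Finset.prod_le_prod (fun i _ => abs_nonneg _) fun i _ => ?_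
  calc |γ + (i : ℝ)| ≤ |γ| + |(i : ℝ)| := abs_add_le _ _
    _ ≤ |γ| + 1 + i := by rw [Nat.abs_cast]; linarith

lemma poch_le_succ {c : ℝ} (hc : 1 ≤ c) (k : ℕ) : poch c k ≤ poch c (k + 1) := by
  rw [poch_succ]
  have h1 : (1 : ℝ) ≤ c + k := le_add_of_le_of_nonneg hc (Nat.cast_nonneg k)
  exact le_mul_of_one_le_right (poch_pos (by linarith) k).le h1

lemma summable_poch_shift {c r : ℝ} (hc : 0 < c) (hr0 : 0 < r) (hr1 : r < 1) :
    Summable fun k : ℕ => poch c (k + 1) / (Nat.factorial k : ℝ) * r ^ k := by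
  set f : ℕ → ℝ := fun k => poch c (k + 1) / (Nat.factorial k : ℝ) * r ^ k with hf
  have hfpos : ∀ k, 0 < f k := fun k => by
    have h1 := poch_pos hc (k + 1)
    have h2 : (0 : ℝ) < (Nat.factorial k : ℝ) := by positivity
    positivity
  refine summable_of_ratio_test_tendsto_lt_one hr1
    (Filter.Eventually.of_forall fun k => (hfpos k).ne') ?_
  have key : ∀ k : ℕ, ‖f (k + 1)‖ / ‖f k‖ = (c / (k + 1) + 1) * r := by
    intro k
    have h1 : poch c (k + 2) = poch c (k + 1) * (c + (k + 1)) := by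
      have := poch_succ c (k + 1); push_cast at this ⊢; linarith
    have h2 : (Nat.factorial (k + 1) : ℝ) = (k + 1) * Nat.factorial k := by
      rw [Nat.factorial_succ]; push_cast; ring
    rw [Real.norm_of_nonneg (hfpos _).le, Real.norm_of_nonneg (hfpos _).le]
    show poch c (k + 1 + 1) / (Nat.factorial (k + 1) : ℝ) * r ^ (k + 1) /
        (poch c (k + 1) / (Nat.factorial k : ℝ) * r ^ k) = _
    have hp := (poch_pos hc (k + 1)).ne'
    have hfac : (Nat.factorial k : ℝ) ≠ 0 := by positivity
    have hk1 : ((k : ℝ) + 1) ≠ 0 := by positivity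
    rw [show k + 1 + 1 = k + 2 from rfl, h1, h2, pow_succ]
    field_simp
  have hlim : Tendsto (fun k : ℕ => (c / (k + 1) + 1) * r) atTop (𝓝 r) := by
    have h1 : Tendsto (fun k : ℕ => ((k : ℝ) + 1)) atTop atTop :=
      tendsto_atTop_add_const_right _ 1 tendsto_natCast_atTop_atTop
    have h2 : Tendsto (fun k : ℕ => c / ((k : ℝ) + 1)) atTop (𝓝 0) :=
      Tendsto.div_atTop tendsto_const_nhds h1
    have h3 : Tendsto (fun k : ℕ => c / ((k : ℝ) + 1) + 1) atTop (𝓝 (0 + 1)) :=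
      h2.add tendsto_const_nhds
    have h4 := h3.mul (tendsto_const_nhds (α := ℕ) (x := r))
    simpa using h4
  exact hlim.congr fun k => (key k).symm

lemma term_bound (γ : ℝ) {x r : ℝ} (hxr : |x| ≤ r) (k : ℕ) :
    |poch γ k / (Nat.factorial k : ℝ) * x ^ k| ≤
      poch (|γ| + 1) (k + 1) / (Nat.factorial k : ℝ) * r ^ k := by
  have h0r : 0 ≤ r := (abs_nonneg x).trans hxr
  have h1 : |poch γ k| ≤ poch (|γ| + 1) (k + 1) :=
    (abs_poch_le γ k).trans (poch_le_succ (by linarith [abs_nonneg γ]) k)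
  have h2 : |x| ^ k ≤ r ^ k := pow_le_pow_left₀ (abs_nonneg x) hxr k
  rw [abs_mul, abs_div, abs_pow, Nat.abs_cast]
  have hfac : (0 : ℝ) < (Nat.factorial k : ℝ) := by positivity
  have hp : (0 : ℝ) < poch (|γ| + 1) (k + 1) := poch_pos (by positivity) _
  refine mul_le_mul ?_ h2 (pow_nonneg (abs_nonneg x) k) (div_nonneg hp.le hfac.le)
  exact div_le_div_of_nonneg_right h1 hfac.le

lemma summable_A (γ : ℝ) {x : ℝ} (hx : |x| < 1) :
    Summable fun k : ℕ => poch γ k / (Nat.factorial k : ℝ) * x ^ k := by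
  set r : ℝ := (|x| + 1) / 2 with hr
  have hxr : |x| ≤ r := by rw [hr]; linarith
  have hr1 : r < 1 := by rw [hr]; linarith
  have hr0 : 0 < r := by positivity
  exact Summable.of_norm_bounded
    (summable_poch_shift (by positivity : (0:ℝ) < |γ| + 1) hr0 hr1)
    fun k => term_bound γ hxr k

lemma summable_B (γ : ℝ) {x : ℝ} (hx : |x| < 1) :
    Summable fun k : ℕ => poch γ (k + 1) / (Nat.factorial k : ℝ) * x ^ k := by
  set r : ℝ := (|x| + 1) / 2 with hr
  have hxr : |x| ≤ r := by rw [hr]; linarith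
  have hr1 : r < 1 := by rw [hr]; linarith
  have hr0 : 0 < r := by positivity
  refine Summable.of_norm_bounded
    (summable_poch_shift (by positivity : (0:ℝ) < |γ| + 1) hr0 hr1) fun k => ?_
  have h1 : |poch γ (k + 1)| ≤ poch (|γ| + 1) (k + 1) := abs_poch_le γ (k + 1)
  have h2 : |x| ^ k ≤ r ^ k := pow_le_pow_left₀ (abs_nonneg x) hxr k
  rw [norm_mul, norm_div, Real.norm_natCast, norm_pow, Real.norm_eq_abs, Real.norm_eq_abs]
  have hfac : (0 : ℝ) < (Nat.factorial k : ℝ) := by positivity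
  have hp : (0 : ℝ) < poch (|γ| + 1) (k + 1) := poch_pos (by positivity) _
  refine mul_le_mul ?_ h2 (pow_nonneg (abs_nonneg x) k) (div_nonneg hp.le hfac.le)
  exact div_le_div_of_nonneg_right h1 hfac.le

lemma key_deriv (γ : ℝ) {x : ℝ} (hx : |x| < 1) :
    HasDerivAt (fun y : ℝ => ∑' k : ℕ, poch γ k / (Nat.factorial k : ℝ) * y ^ k)
      (∑' k : ℕ, poch γ (k + 1) / (Nat.factorial k : ℝ) * x ^ k) x := by
  set r : ℝ := (|x| + 1) / 2 with hrdef
  have hr1 : r < 1 := by rw [hrdef]; linarith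
  have hxr : |x| < r := by rw [hrdef]; linarith [abs_nonneg x]
  have hr0 : 0 < r := lt_of_le_of_lt (abs_nonneg x) hxr
  set c : ℝ := |γ| + 1 with hcdef
  have hc : (0 : ℝ) < c := by rw [hcdef]; positivity
  set u : ℕ → ℝ := fun k => poch c k / (Nat.factorial k : ℝ) * ((k : ℝ) * r ^ (k - 1))
    with hudef
  have hu : Summable u := by
    rw [← summable_nat_add_iff 1]
    have heq : (fun k : ℕ => u (k + 1)) =
        fun k : ℕ => poch c (k + 1) / (Nat.factorial k : ℝ) * r ^ k := by
      funext k
      rw [hudef]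
      simp only [Nat.add_sub_cancel]
      have h2 : (Nat.factorial (k + 1) : ℝ) = ((k : ℝ) + 1) * Nat.factorial k := by
        rw [Nat.factorial_succ]; push_cast; ring
      have hfac : (Nat.factorial k : ℝ) ≠ 0 := by positivity
      rw [h2]
      push_cast
      field_simp
    rw [heq]
    exact summable_poch_shift hc hr0 hr1
  set g' : ℕ → ℝ → ℝ := fun k y => poch γ k / (Nat.factorial k : ℝ) * ((k : ℝ) * y ^ (k - 1))
    with hg'def
  have hbound : ∀ (k : ℕ) (y : ℝ), y ∈ Metric.ball (0 : ℝ) r → ‖g' k y‖ ≤ u k := by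
    intro k y hy
    have hyr : |y| ≤ r := by
      rw [Metric.mem_ball, dist_zero_right, Real.norm_eq_abs] at hy
      exact hy.le
    rw [hg'def, hudef]
    simp only
    simp only [norm_mul, norm_div, norm_pow, Real.norm_eq_abs, Nat.abs_cast,
      Real.norm_natCast, abs_abs]
    have hfac : (0 : ℝ) < (Nat.factorial k : ℝ) := by positivity
    have hp : (0 : ℝ) < poch c k := poch_pos hc _
    have h1 : |poch γ k| ≤ poch c k := abs_poch_le γ k
    have h2 : |y| ^ (k - 1) ≤ r ^ (k - 1) := pow_le_pow_left₀ (abs_nonneg y) hyr _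
    refine mul_le_mul (div_le_div_of_nonneg_right h1 hfac.le) ?_ (by positivity)
      (div_nonneg hp.le hfac.le)
    exact mul_le_mul_of_nonneg_left h2 (Nat.cast_nonneg k)
  have hg : ∀ (k : ℕ) (y : ℝ), y ∈ Metric.ball (0 : ℝ) r →
      HasDerivAt (fun w : ℝ => poch γ k / (Nat.factorial k : ℝ) * w ^ k) (g' k y) y := by
    intro k y _
    exact (hasDerivAt_pow k y).const_mul _
  have hsum0 : Summable fun k : ℕ => poch γ k / (Nat.factorial k : ℝ) * (0 : ℝ) ^ k := by
    apply summable_of_ne_finset_zero (s := {0})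
    intro k hk
    have hk0 : k ≠ 0 := by simpa using hk
    simp [zero_pow hk0]
  have hx0 : (0 : ℝ) ∈ Metric.ball (0 : ℝ) r := Metric.mem_ball_self hr0
  have hxball : x ∈ Metric.ball (0 : ℝ) r := by
    rw [Metric.mem_ball, dist_zero_right, Real.norm_eq_abs]; exact hxr
  have hmain := hasDerivAt_tsum_of_isPreconnected hu Metric.isOpen_ball
    (convex_ball (0 : ℝ) r).isPreconnected hg hbound hx0 hsum0 hxball
  have hsumd : Summable fun k => g' k x := hu.of_norm_bounded fun k => hbound k x hxball
  have hshift : (∑' k : ℕ, g' k x) = ∑' k : ℕ, poch γ (k + 1) / (Nat.factorial k : ℝ) * x ^ k := by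
    rw [Summable.tsum_eq_zero_add hsumd]
    have hzero : g' 0 x = 0 := by simp [hg'def]
    rw [hzero, zero_add]
    apply tsum_congr
    intro k
    rw [hg'def]
    simp only [Nat.add_sub_cancel]
    have h2 : (Nat.factorial (k + 1) : ℝ) = ((k : ℝ) + 1) * Nat.factorial k := by
      rw [Nat.factorial_succ]; push_cast; ring
    have hfac : (Nat.factorial k : ℝ) ≠ 0 := by positivity
    rw [h2]
    push_cast
    field_simp
  rwa [hshift] at hmain

lemma ode_identity (γ : ℝ) {x : ℝ} (hx : |x| < 1) :
    (1 - x) * (∑' k : ℕ, poch γ (k + 1) / (Nat.factorial k : ℝ) * x ^ k) =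
      γ * ∑' k : ℕ, poch γ k / (Nat.factorial k : ℝ) * x ^ k := by
  have hA := summable_A γ hx
  have hB := summable_B γ hx
  set D : ℝ := ∑' k : ℕ, poch γ (k + 1) / (Nat.factorial k : ℝ) * x ^ k with hD
  set f : ℝ := ∑' k : ℕ, poch γ k / (Nat.factorial k : ℝ) * x ^ k with hf
  have hpt : ∀ k : ℕ, poch γ (k + 1) / (Nat.factorial k : ℝ) * x ^ k -
      γ * (poch γ k / (Nat.factorial k : ℝ) * x ^ k) =
      (k : ℝ) * (poch γ k / (Nat.factorial k : ℝ) * x ^ k) := by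
    intro k
    have h1 : poch γ (k + 1) = poch γ k * (γ + k) := poch_succ γ k
    have hfac : (Nat.factorial k : ℝ) ≠ 0 := by positivity
    rw [h1]
    field_simp
    ring
  have hE : Summable fun k : ℕ => (k : ℝ) * (poch γ k / (Nat.factorial k : ℝ) * x ^ k) := by
    refine ((hB.sub (hA.mul_left γ)).congr fun k => ?_)
    exact hpt k
  have hkey : D - γ * f = ∑' k : ℕ, (k : ℝ) * (poch γ k / (Nat.factorial k : ℝ) * x ^ k) := by
    rw [hD, hf, ← tsum_mul_left, ← Summable.tsum_sub hB (hA.mul_left γ)]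
    exact tsum_congr hpt
  have hshift : (∑' k : ℕ, (k : ℝ) * (poch γ k / (Nat.factorial k : ℝ) * x ^ k)) = x * D := by
    rw [Summable.tsum_eq_zero_add hE]
    simp only [Nat.cast_zero, zero_mul, zero_add]
    rw [hD, ← tsum_mul_left]
    apply tsum_congr
    intro k
    have h2 : (Nat.factorial (k + 1) : ℝ) = ((k : ℝ) + 1) * Nat.factorial k := by
      rw [Nat.factorial_succ]; push_cast; ring
    have hfac : (Nat.factorial k : ℝ) ≠ 0 := by positivity
    rw [h2]
    push_cast
    field_simp
    ring
  have : D - γ * f = x * D := by rw [hkey, hshift]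
  linarith [this]

lemma tsum_binomial {γ x : ℝ} (hx : |x| < 1) :
    (∑' k : ℕ, poch γ k / (Nat.factorial k : ℝ) * x ^ k) = (1 - x) ^ (-γ) := by
  set f : ℝ → ℝ := fun y => ∑' k : ℕ, poch γ k / (Nat.factorial k : ℝ) * y ^ k with hfdef
  set F : ℝ → ℝ := fun y => (1 - y) ^ γ * f y with hFdef
  have hmem : x ∈ Ioo (-1 : ℝ) 1 := by
    rcases abs_lt.mp hx with ⟨h1, h2⟩; exact ⟨h1, h2⟩
  have h0mem : (0 : ℝ) ∈ Ioo (-1 : ℝ) 1 := by constructor <;> norm_num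
  have hF : ∀ y ∈ Ioo (-1 : ℝ) 1, HasDerivAt F 0 y := by
    intro y hy
    have hy' : |y| < 1 := abs_lt.mpr ⟨hy.1, hy.2⟩
    have h1y : (0 : ℝ) < 1 - y := by linarith [hy.2]
    have hf' : HasDerivAt f
        (∑' k : ℕ, poch γ (k + 1) / (Nat.factorial k : ℝ) * y ^ k) y := key_deriv γ hy'
    set D : ℝ := ∑' k : ℕ, poch γ (k + 1) / (Nat.factorial k : ℝ) * y ^ k with hDdef
    have hinner : HasDerivAt (fun w : ℝ => 1 - w) (-1 : ℝ) y := by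
      exact (hasDerivAt_id' y).const_sub 1
    have hrp : HasDerivAt (fun w : ℝ => (1 - w) ^ γ)
        (γ * (1 - y) ^ (γ - 1) * (-1)) y := by
      have := hinner.rpow_const (p := γ) (Or.inl h1y.ne')
      simpa using this
    have hprod := hrp.mul hf'
    have hode := ode_identity γ hy'
    have hpow : (1 - y) ^ γ = (1 - y) ^ (γ - 1) * (1 - y) := by
      rw [← Real.rpow_add_one h1y.ne' (γ - 1)]
      norm_num
    refine hprod.congr_deriv (Eq.symm ?_)
    rw [hpow]
    have hodD : (1 - y) * D = γ * f y := hode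
    linear_combination (-(1 - y) ^ (γ - 1)) * hodD
  have hdiff : DifferentiableOn ℝ F (Ioo (-1 : ℝ) 1) := fun y hy =>
    ((hF y hy).differentiableAt).differentiableWithinAt
  have hfderiv : ∀ y ∈ Ioo (-1 : ℝ) 1, fderivWithin ℝ F (Ioo (-1 : ℝ) 1) y = 0 := by
    intro y hy
    rw [fderivWithin_of_isOpen isOpen_Ioo hy]
    have h1 := (hF y hy).hasFDerivAt.fderiv
    rw [h1]
    ext w
    simp
  have hconst := (convex_Ioo (-1 : ℝ) 1).is_const_of_fderivWithin_eq_zero hdiff hfderiv hmem h0mem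
  have hf0 : f 0 = 1 := by
    rw [hfdef]
    simp only
    rw [tsum_eq_single 0 (fun k hk => by simp [zero_pow hk])]
    simp [poch]
  have hF0 : F 0 = 1 := by
    rw [hFdef]; simp only; rw [hf0]; simp [Real.one_rpow]
  have hx1 : (0 : ℝ) < 1 - x := by linarith [hmem.2]
  have hFx : (1 - x) ^ γ * f x = 1 := by
    have := hconst
    rw [hF0] at this
    exact this
  rw [Real.rpow_neg hx1.le]
  exact eq_inv_of_mul_eq_one_left (by rw [mul_comm]; exact hFx)

/-- Laplace transform of the Prabhakar kernel:
`∫_0^∞ e^{-st} t^{β-1} E_{α,β}^γ(t^α z) dt = s^{αγ-β} (s^α - z)^{-γ}`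
for real `s > 0` with `s^α > |z|`, where `α > 0`, `β > 0` and `z` real. -/
theorem prabhakar_laplace (α β γ z s : ℝ) (hα : 0 < α) (hβ : 0 < β)
    (hs : 0 < s) (hsz : |z| < s ^ α) :
    ∫ t in Set.Ioi (0 : ℝ),
        Real.exp (-(s * t)) * t ^ (β - 1) * prabhakarR α β γ (t ^ α * z) =
      s ^ (α * γ - β) * (s ^ α - z) ^ (-γ) := by
  have hsa : (0 : ℝ) < s ^ α := Real.rpow_pos_of_pos hs α
  have hw : |z / s ^ α| < 1 := by
    rw [abs_div, abs_of_pos hsa]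
    exact (div_lt_one hsa).mpr hsz
  -- the constant in each term
  set C : ℕ → ℝ := fun k =>
    poch γ k * z ^ k / (Nat.factorial k * Real.Gamma (α * k + β)) with hCdef
  set F : ℕ → ℝ → ℝ := fun k t =>
    t ^ (α * k + β - 1) * Real.exp (-(s * t)) * C k with hFdef
  have hGpos : ∀ k : ℕ, 0 < Real.Gamma (α * k + β) := by
    intro k
    apply Real.Gamma_pos_of_pos
    have : (0 : ℝ) ≤ α * k := by positivity
    linarith
  have hepos : ∀ k : ℕ, (0 : ℝ) < α * k + β := by
    intro k
    have : (0 : ℝ) ≤ α * k := by positivity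
    linarith
  -- pointwise identity on Ioi 0
  have hpt : ∀ t ∈ Set.Ioi (0 : ℝ),
      Real.exp (-(s * t)) * t ^ (β - 1) * prabhakarR α β γ (t ^ α * z) =
        ∑' k : ℕ, F k t := by
    intro t ht
    rw [Set.mem_Ioi] at ht
    rw [prabhakarR, ← tsum_mul_left]
    apply tsum_congr
    intro k
    have hpow : (t ^ α) ^ k = t ^ (α * k) := by
      rw [← Real.rpow_natCast (t ^ α) k, ← Real.rpow_mul ht.le]
    have hsplit : t ^ (α * (k : ℝ) + β - 1) = t ^ (α * k) * t ^ (β - 1) := by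
      rw [← Real.rpow_add ht]; ring_nf
    rw [hFdef, hCdef]
    simp only
    rw [mul_pow, hpow, hsplit]
    ring
  rw [MeasureTheory.setIntegral_congr_fun measurableSet_Ioi hpt]
  -- integrability of each term
  have hbase : ∀ k : ℕ, IntegrableOn
      (fun t : ℝ => t ^ (α * k + β - 1) * Real.exp (-(s * t))) (Set.Ioi 0) := by
    intro k
    have h1 : (-1 : ℝ) < α * k + β - 1 := by linarith [hepos k]
    have := integrableOn_rpow_mul_exp_neg_mul_rpow h1 one_pos hs
    simpa [Real.rpow_one, neg_mul] using this
  have hint : ∀ k : ℕ, MeasureTheory.Integrable (F k)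
      (MeasureTheory.volume.restrict (Set.Ioi 0)) := by
    intro k
    exact ((hbase k).mul_const (C k))
  -- value of each integral
  have hval : ∀ k : ℕ, (∫ t in Set.Ioi (0 : ℝ), F k t) =
      (1 / s) ^ (α * k + β) * Real.Gamma (α * k + β) * C k := by
    intro k
    rw [hFdef]
    simp only
    rw [MeasureTheory.integral_mul_const,
      Real.integral_rpow_mul_exp_neg_mul_Ioi (hepos k) hs]
  -- value of each norm integral
  have hnormval : ∀ k : ℕ, (∫ t in Set.Ioi (0 : ℝ), ‖F k t‖) =
      (1 / s) ^ (α * k + β) * Real.Gamma (α * k + β) * |C k| := by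
    intro k
    have heq : ∀ t ∈ Set.Ioi (0 : ℝ), ‖F k t‖ =
        t ^ (α * k + β - 1) * Real.exp (-(s * t)) * |C k| := by
      intro t ht
      rw [Set.mem_Ioi] at ht
      rw [hFdef]
      simp only
      rw [norm_mul, norm_mul, Real.norm_eq_abs, Real.norm_eq_abs, Real.norm_eq_abs,
        abs_of_nonneg (Real.rpow_nonneg ht.le _), abs_of_pos (Real.exp_pos _)]
    rw [MeasureTheory.setIntegral_congr_fun measurableSet_Ioi heq,
      MeasureTheory.integral_mul_const,
      Real.integral_rpow_mul_exp_neg_mul_Ioi (hepos k) hs]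
  -- generic algebraic evaluation of the term value
  have halg : ∀ (p zz : ℝ) (k : ℕ),
      (1 / s) ^ (α * k + β) * Real.Gamma (α * k + β) *
        (p * zz ^ k / (Nat.factorial k * Real.Gamma (α * k + β))) =
      s ^ (-β) * (p / (Nat.factorial k : ℝ) * (zz / s ^ α) ^ k) := by
    intro p zz k
    have h1 : (1 / s) ^ (α * (k : ℝ) + β) = ((s ^ α) ^ k * s ^ β)⁻¹ := by
      rw [one_div, Real.inv_rpow hs.le, Real.rpow_add hs]
      congr 2
      rw [← Real.rpow_natCast (s ^ α) k, ← Real.rpow_mul hs.le]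
    have hG : Real.Gamma (α * k + β) ≠ 0 := (hGpos k).ne'
    have hfac : (Nat.factorial k : ℝ) ≠ 0 := by positivity
    have hsb : s ^ β ≠ 0 := (Real.rpow_pos_of_pos hs β).ne'
    have hsak : ((s ^ α) ^ k : ℝ) ≠ 0 := pow_ne_zero k hsa.ne'
    rw [h1, Real.rpow_neg hs.le, div_pow]
    field_simp
  -- summability of norm integrals
  have hsummable : Summable fun k : ℕ => ∫ t in Set.Ioi (0 : ℝ), ‖F k t‖ := by
    have heq : (fun k : ℕ => ∫ t in Set.Ioi (0 : ℝ), ‖F k t‖) =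
        fun k : ℕ => s ^ (-β) * (|poch γ k| / (Nat.factorial k : ℝ) * (|z| / s ^ α) ^ k) := by
      funext k
      rw [hnormval k, hCdef]
      have hCabs : |poch γ k * z ^ k / (Nat.factorial k * Real.Gamma (α * k + β))| =
          |poch γ k| * |z| ^ k / (Nat.factorial k * Real.Gamma (α * k + β)) := by
        rw [abs_div, abs_mul, abs_pow]
        congr 1
        rw [abs_of_pos (by positivity : (0:ℝ) < (Nat.factorial k : ℝ) * Real.Gamma (α * k + β))]
      rw [hCabs]
      exact halg |poch γ k| |z| k
    rw [heq]
    apply Summable.mul_left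
    -- compare with majorant
    set r : ℝ := (|z / s ^ α| + 1) / 2 with hrdef
    have hxr : |z / s ^ α| ≤ r := by rw [hrdef]; linarith
    have hr1 : r < 1 := by rw [hrdef]; linarith
    have hr0 : 0 < r := by positivity
    refine Summable.of_norm_bounded
      (summable_poch_shift (by positivity : (0:ℝ) < |γ| + 1) hr0 hr1) fun k => ?_
    have habs : |z| / s ^ α = |z / s ^ α| := by rw [abs_div, abs_of_pos hsa]
    rw [habs]
    have := term_bound γ (le_refl |z / s ^ α|) k
    calc ‖|poch γ k| / (Nat.factorial k : ℝ) * |z / s ^ α| ^ k‖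
        = |poch γ k / (Nat.factorial k : ℝ) * (z / s ^ α) ^ k| := by
          simp [abs_mul, abs_div, abs_pow, Nat.abs_cast, abs_abs]
      _ ≤ poch (|γ| + 1) (k + 1) / (Nat.factorial k : ℝ) * |z / s ^ α| ^ k :=
          term_bound γ (le_refl _) k
      _ ≤ poch (|γ| + 1) (k + 1) / (Nat.factorial k : ℝ) * r ^ k := by
          have hp : (0 : ℝ) < poch (|γ| + 1) (k + 1) := poch_pos (by positivity) _
          have hfac : (0 : ℝ) < (Nat.factorial k : ℝ) := by positivity
          exact mul_le_mul_of_nonneg_left (pow_le_pow_left₀ (abs_nonneg _) hxr k)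
            (div_nonneg hp.le hfac.le)
  -- interchange sum and integral
  rw [← MeasureTheory.integral_tsum_of_summable_integral_norm hint hsummable]
  -- evaluate the sum
  have hsumeq : (∑' k : ℕ, ∫ t in Set.Ioi (0 : ℝ), F k t) =
      s ^ (-β) * ∑' k : ℕ, poch γ k / (Nat.factorial k : ℝ) * (z / s ^ α) ^ k := by
    rw [← tsum_mul_left]
    apply tsum_congr
    intro k
    rw [hval k, hCdef]
    exact halg (poch γ k) z k
  rw [hsumeq, tsum_binomial hw]
  -- final algebra
  have hz : (0 : ℝ) < s ^ α - z := by
    have := le_abs_self z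
    linarith
  have h1 : 1 - z / s ^ α = (s ^ α - z) / s ^ α := by field_simp
  have hfrac : (1 - z / s ^ α) ^ (-γ) = (s ^ α) ^ γ * (s ^ α - z) ^ (-γ) := by
    rw [h1, Real.rpow_neg (by positivity), Real.div_rpow hz.le hsa.le, inv_div,
      div_eq_mul_inv, ← Real.rpow_neg hz.le]
  have hkey : s ^ (α * γ - β) = s ^ (-β) * (s ^ α) ^ γ := by
    rw [← Real.rpow_mul hs.le, ← Real.rpow_add hs]
    ring_nf
  rw [hfrac, hkey]
  ring
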